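/- Let s ≥ 2 and let (H_n)_{n≥1} be the intertwining sequence of s sequences (η^{(j)}_i)_{i≥0} ⊂ ℂ (j = 1,…,s) of pairwise distinct elements. Then for every N ≥ 1 one has VDM(H_1,…,H_N) ≠ 0; equivalently, the set Ω_N = {H_1,…,H_N} is unisolvent for the polynomial space 𝒫_N = span{e_1,…,e_N}. -/
import Mathlib


open Finset

/-- Graded lexicographic strict order on `ℕ^s`. -/
def GradedLexLt {s : ℕ} (k l : Fin s → ℕ) : Prop :=
  (∑ i, k i) < (∑ i, l i) ∨
    ((∑ i, k i) = (∑ i, l i) ∧ ∃ t : Fin s, (∀ u, u < t → k u = l u) ∧ k t < l t)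

/-- Generalized Vandermonde determinant `det [e_i(G_j)]` where the monomials `e_i`
are given by the enumeration `kEnum` of `ℕ^s`. -/
noncomputable def VDM {s : ℕ} (kEnum : ℕ → Fin s → ℕ) {N : ℕ}
    (G : Fin N → Fin s → ℂ) : ℂ :=
  Matrix.det (Matrix.of fun i j : Fin N => ∏ t, G j t ^ kEnum (i : ℕ) t)

lemma glex_asymm {s : ℕ} {k l : Fin s → ℕ} (h1 : GradedLexLt k l) (h2 : GradedLexLt l k) :
    False := by
  rcases h1 with h1 | ⟨e1, t1, hp1, ht1⟩
  · rcases h2 with h2 | ⟨e2, -⟩ <;> omega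
  · rcases h2 with h2 | ⟨e2, t2, hp2, ht2⟩
    · omega
    · rcases lt_trichotomy t1 t2 with h | h | h
      · have := hp2 t1 h; omega
      · subst h; omega
      · have := hp1 t2 h; omega

lemma glex_of_le_ne {s : ℕ} {k l : Fin s → ℕ} (hle : ∀ t, k t ≤ l t) (hne : k ≠ l) :
    GradedLexLt k l := by
  left
  obtain ⟨t, ht⟩ : ∃ t, k t ≠ l t := by
    by_contra h; push_neg at h; exact hne (funext h)
  exact Finset.sum_lt_sum (fun i _ => hle i) ⟨t, Finset.mem_univ t, lt_of_le_of_ne (hle t) ht⟩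

lemma lt_of_glex {s : ℕ} {kEnum : ℕ → Fin s → ℕ}
    (hinj : Function.Injective kEnum)
    (hmono : ∀ a b : ℕ, a < b → GradedLexLt (kEnum a) (kEnum b))
    {a b : ℕ} (h : GradedLexLt (kEnum a) (kEnum b)) : a < b := by
  rcases lt_trichotomy a b with hab | hab | hab
  · exact hab
  · subst hab; exact absurd h (fun h' => glex_asymm h' h')
  · exact absurd (glex_asymm h (hmono b a hab)) (fun x => x)

theorem statement3_aux {s : ℕ}
    (kEnum : ℕ → Fin s → ℕ) (hbij : Function.Bijective kEnum)
    (hmono : ∀ a b : ℕ, a < b → GradedLexLt (kEnum a) (kEnum b))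
    (η : Fin s → ℕ → ℂ) (hdist : ∀ j, Function.Injective (η j))
    (H : ℕ → Fin s → ℂ) (hH : ∀ n j, H n j = η j (kEnum n j)) :
    ∀ N : ℕ,
      (Matrix.of fun i j : Fin N => ∏ t, H (j : ℕ) t ^ kEnum (i : ℕ) t).det ≠ 0 := by
  intro N
  induction N with
  | zero => simp [Matrix.det_fin_zero]
  | succ N ih =>
    -- notation
    set k : Fin s → ℕ := kEnum N with hk
    set P : Fin s → Polynomial ℂ :=
      fun t => ∏ i ∈ Finset.range (k t), (Polynomial.X - Polynomial.C (η t i)) with hP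
    have hPmonic : ∀ t, (P t).Monic := fun t =>
      Polynomial.monic_prod_of_monic _ _ (fun i _ => Polynomial.monic_X_sub_C _)
    have hPdeg : ∀ t, (P t).natDegree = k t := by
      intro t
      rw [hP]
      rw [Polynomial.natDegree_prod _ _ (fun i _ => Polynomial.X_sub_C_ne_zero _)]
      simp [Polynomial.natDegree_X_sub_C]
    set q : Fin (N + 1) → ℂ := fun m => ∏ t, (P t).coeff (kEnum (m : ℕ) t) with hq
    have hqlast : q (Fin.last N) = 1 := by
      rw [hq]
      simp only [Fin.val_last]
      have : ∀ t, (P t).coeff (kEnum N t) = 1 := by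
        intro t
        have := (hPmonic t).coeff_natDegree
        rwa [hPdeg t] at this
      simp [this]
    -- key identity
    have keyQ : ∀ x : Fin s → ℂ,
        (∑ m : Fin (N + 1), q m * ∏ t, x t ^ kEnum (m : ℕ) t)
          = ∏ t, ∏ i ∈ Finset.range (k t), (x t - η t i) := by
      intro x
      have heval : ∀ t, ∏ i ∈ Finset.range (k t), (x t - η t i) = (P t).eval (x t) := by
        intro t; rw [hP]; simp [Polynomial.eval_prod]
      have hdeglt : ∀ t, (P t).natDegree < k t + 1 := fun t => by rw [hPdeg]; omega
      calc (∑ m : Fin (N + 1), q m * ∏ t, x t ^ kEnum (m : ℕ) t)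
          = ∑ g ∈ Fintype.piFinset (fun t => Finset.range (k t + 1)),
              ((∏ t, (P t).coeff (g t)) * ∏ t, x t ^ g t) := ?_
        _ = ∏ t, ∏ i ∈ Finset.range (k t), (x t - η t i) := ?_
      · -- sum over Fin (N+1) equals sum over piFinset
        have hinj2 : ∀ a ∈ (Finset.univ : Finset (Fin (N + 1))),
            ∀ b ∈ (Finset.univ : Finset (Fin (N + 1))),
            kEnum (a : ℕ) = kEnum (b : ℕ) → a = b := fun a _ b _ hab =>
          Fin.val_injective (hbij.injective hab)
        have h1 : ∑ g ∈ Finset.image (fun m : Fin (N + 1) => kEnum (m : ℕ)) Finset.univ,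
            ((∏ t, (P t).coeff (g t)) * ∏ t, x t ^ g t)
            = ∑ m : Fin (N + 1),
                ((∏ t, (P t).coeff (kEnum (m : ℕ) t)) * ∏ t, x t ^ kEnum (m : ℕ) t) :=
          Finset.sum_image hinj2
        rw [show (∑ m : Fin (N + 1), q m * ∏ t, x t ^ kEnum (m : ℕ) t)
            = ∑ m : Fin (N + 1),
                ((∏ t, (P t).coeff (kEnum (m : ℕ) t)) * ∏ t, x t ^ kEnum (m : ℕ) t) from rfl]
        rw [← h1]
        symm
        apply Finset.sum_subset
        · -- piFinset ⊆ image
          intro g hg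
          rw [Fintype.mem_piFinset] at hg
          have hgle : ∀ t, g t ≤ k t := by
            intro t; have := hg t; rw [Finset.mem_range] at this; omega
          obtain ⟨m, hm⟩ := hbij.surjective g
          have hmN : m < N + 1 := by
            by_cases hgk : g = k
            · have : m = N := hbij.injective (by rw [hm, hgk, hk])
              omega
            · have : GradedLexLt (kEnum m) (kEnum N) := by
                rw [hm, ← hk]; exact glex_of_le_ne hgle hgk
              have := lt_of_glex hbij.injective hmono this
              omega
          rw [Finset.mem_image]
          exact ⟨⟨m, hmN⟩, Finset.mem_univ _, by simpa using hm⟩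
        · -- terms outside piFinset vanish
          intro g hgimg hgpi
          rw [Fintype.mem_piFinset] at hgpi
          push_neg at hgpi
          obtain ⟨t, ht⟩ := hgpi
          rw [Finset.mem_range] at ht
          push_neg at ht
          have hzero : (P t).coeff (g t) = 0 :=
            Polynomial.coeff_eq_zero_of_natDegree_lt (by rw [hPdeg]; omega)
          rw [Finset.prod_eq_zero (Finset.mem_univ t) hzero, zero_mul]
      · have h2 : ∏ t, ∏ i ∈ Finset.range (k t), (x t - η t i)
            = ∑ g ∈ Fintype.piFinset (fun t => Finset.range (k t + 1)),
                ∏ t, ((P t).coeff (g t) * x t ^ g t) := by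
          calc ∏ t, ∏ i ∈ Finset.range (k t), (x t - η t i)
              = ∏ t, ∑ d ∈ Finset.range (k t + 1), (P t).coeff d * x t ^ d :=
                Finset.prod_congr rfl fun t _ => by
                  rw [heval t, Polynomial.eval_eq_sum_range' (hdeglt t)]
            _ = ∑ g ∈ Fintype.piFinset (fun t => Finset.range (k t + 1)),
                  ∏ t, ((P t).coeff (g t) * x t ^ g t) := by
                rw [Finset.prod_univ_sum]
        rw [h2]
        exact Finset.sum_congr rfl fun g _ => Finset.prod_mul_distrib.symm
    -- evaluation at previous points vanishes
    have zeroEval : ∀ n : Fin (N + 1), (n : ℕ) < N →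
        ∏ t, ∏ i ∈ Finset.range (k t), (H (n : ℕ) t - η t i) = 0 := by
      intro n hn
      have : ∃ t, kEnum (n : ℕ) t < k t := by
        by_contra hcon
        push_neg at hcon
        by_cases heq : kEnum (n : ℕ) = k
        · have : (n : ℕ) = N := hbij.injective (by rw [heq, hk])
          omega
        · have : GradedLexLt (kEnum N) (kEnum (n : ℕ)) := by
            rw [← hk]; exact glex_of_le_ne hcon (fun h => heq h.symm)
          have := lt_of_glex hbij.injective hmono this
          omega
      obtain ⟨t, ht⟩ := this
      apply Finset.prod_eq_zero (Finset.mem_univ t)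
      apply Finset.prod_eq_zero (Finset.mem_range.mpr ht)
      rw [hH]; ring
    -- evaluation at the new point is nonzero
    have lastEval : ∏ t, ∏ i ∈ Finset.range (k t), (H N t - η t i) ≠ 0 := by
      rw [Finset.prod_ne_zero_iff]
      intro t _
      rw [Finset.prod_ne_zero_iff]
      intro i hi
      rw [Finset.mem_range, hk] at hi
      rw [hH]
      intro hcon
      have heq : η t (kEnum N t) = η t i := sub_eq_zero.mp hcon
      have := hdist t heq
      omega
    -- linear algebra
    set A : Matrix (Fin (N + 1)) (Fin (N + 1)) ℂ :=
      Matrix.of fun i j : Fin (N + 1) => ∏ t, H (j : ℕ) t ^ kEnum (i : ℕ) t with hA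
    intro hdet
    obtain ⟨x, hxne, hxnull⟩ := (Matrix.exists_vecMul_eq_zero_iff).mpr hdet
    set c : ℂ := x (Fin.last N) with hc
    set y : Fin (N + 1) → ℂ := fun m => x m - c * q m with hy
    have hylast : y (Fin.last N) = 0 := by rw [hy]; simp [hqlast, hc]
    have hxeval : ∀ j : Fin (N + 1),
        ∑ m : Fin (N + 1), x m * ∏ t, H (j : ℕ) t ^ kEnum (m : ℕ) t = 0 := by
      intro j
      have := congrFun hxnull j
      simpa [Matrix.vecMul, dotProduct, hA] using this
    have hyeval : ∀ j : Fin (N + 1),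
        ∑ m : Fin (N + 1), y m * ∏ t, H (j : ℕ) t ^ kEnum (m : ℕ) t
          = -c * ∏ t, ∏ i ∈ Finset.range (k t), (H (j : ℕ) t - η t i) := by
      intro j
      have expand : ∀ m : Fin (N + 1),
          y m * ∏ t, H (j : ℕ) t ^ kEnum (m : ℕ) t
            = x m * ∏ t, H (j : ℕ) t ^ kEnum (m : ℕ) t
              - c * (q m * ∏ t, H (j : ℕ) t ^ kEnum (m : ℕ) t) := by
        intro m; rw [hy]; ring
      rw [Finset.sum_congr rfl (fun m _ => expand m), Finset.sum_sub_distrib,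
        hxeval j, ← Finset.mul_sum, keyQ (fun t => H (j : ℕ) t)]
      ring
    -- restrict to Fin N
    set y' : Fin N → ℂ := fun i => y (Fin.castSucc i) with hy'
    have hy'null : Matrix.vecMul y'
        (Matrix.of fun i j : Fin N => ∏ t, H (j : ℕ) t ^ kEnum (i : ℕ) t) = 0 := by
      funext j
      have hj : ∑ m : Fin (N + 1), y m * ∏ t, H ((Fin.castSucc j : Fin (N+1)) : ℕ) t ^ kEnum (m : ℕ) t = 0 := by
        rw [hyeval]
        rw [zeroEval (Fin.castSucc j) (by simp)]
        ring
      rw [Fin.sum_univ_castSucc] at hj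
      rw [hylast, zero_mul, add_zero] at hj
      simpa [Matrix.vecMul, dotProduct, hy'] using hj
    have hy'zero : y' = 0 := by
      by_contra hcon
      exact ih ((Matrix.exists_vecMul_eq_zero_iff).mp ⟨y', hcon, hy'null⟩)
    have hyzero : ∀ m, y m = 0 := by
      intro m
      rcases Fin.eq_castSucc_or_eq_last m with ⟨i, hi⟩ | hl
      · rw [hi]; exact congrFun hy'zero i
      · rw [hl]; exact hylast
    have hxq : ∀ m, x m = c * q m := by
      intro m
      have h := hyzero m
      rw [hy] at h
      exact sub_eq_zero.mp h
    have hczero : c = 0 := by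
      have := hxeval (Fin.last N)
      rw [Finset.sum_congr rfl (fun m _ => by rw [hxq m, mul_assoc])] at this
      rw [← Finset.mul_sum, keyQ (fun t => H ((Fin.last N : Fin (N+1)) : ℕ) t)] at this
      simp only [Fin.val_last] at this
      exact (mul_eq_zero.mp this).resolve_right lastEval
    apply hxne
    funext m
    rw [hxq m, hczero, zero_mul]
    rfl

/-- for intertwining sequences of pairwise distinct one-dimensional
sequences, `VDM(H_1,…,H_N) ≠ 0` for every `N ≥ 1` (i.e. `Ω_N` is unisolvent for
`𝒫_N`). Here `kEnum n` stands for the paper's `k(n+1)` and `H n` for `H_{n+1}`. -/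
theorem statement3 {s : ℕ} (hs : 2 ≤ s)
    (kEnum : ℕ → Fin s → ℕ) (hbij : Function.Bijective kEnum)
    (hmono : ∀ a b : ℕ, a < b → GradedLexLt (kEnum a) (kEnum b))
    (η : Fin s → ℕ → ℂ) (hdist : ∀ j, Function.Injective (η j))
    (H : ℕ → Fin s → ℂ) (hH : ∀ n j, H n j = η j (kEnum n j)) :
    ∀ N : ℕ, 1 ≤ N → VDM kEnum (fun i : Fin N => H i) ≠ 0 := by
  intro N _
  exact statement3_aux kEnum hbij hmono η hdist H hH N
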